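/- Let c, f : ℝ → ℂ be continuous 2π-periodic functions, let λ ∈ ℝ, and set c₀ = (2π)⁻¹ ∫₀^{2π} c(t) dt. Assume λ c₀ ∉ ℤ (equivalently e^{−2πi λ c₀} ≠ 1). Then there exists exactly one differentiable 2π-periodic function u : ℝ → ℂ satisfying u′(t) + i λ c(t) u(t) = i f(t) for all t ∈ ℝ, and it is given by u(t) = i (1 − e^{−2πi λ c₀})⁻¹ ∫₀^{2π} exp(−i λ ∫_{t−s}^{t} c(r) dr) f(t−s) ds. -/

import Mathlib

open Real

private lemma hasDerivAt_primitive' {g : ℝ → ℂ} (hg : Continuous g) (t : ℝ) :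
    HasDerivAt (fun x => ∫ r in (0:ℝ)..x, g r) (g t) t :=
  intervalIntegral.integral_hasDerivAt_right (hg.intervalIntegrable 0 t)
    (hg.stronglyMeasurable.stronglyMeasurableAtFilter) hg.continuousAt

private lemma integral_eq_sub' {g : ℝ → ℂ} (hg : Continuous g) (a b : ℝ) :
    (∫ r in a..b, g r) = (∫ r in (0:ℝ)..b, g r) - ∫ r in (0:ℝ)..a, g r :=
  eq_sub_of_add_eq' (intervalIntegral.integral_add_adjacent_intervals
    (hg.intervalIntegrable 0 a) (hg.intervalIntegrable a b))

/-- Formula (2.8): in the nonresonant case `λ c₀ ∉ ℤ` there is exactly one `2π`-periodic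
differentiable solution of `u' + i λ c u = i f`, given by the explicit formula. -/
theorem stmt5 (c f : ℝ → ℂ) (hc : Continuous c) (hf : Continuous f)
    (hcper : Function.Periodic c (2 * Real.pi)) (hfper : Function.Periodic f (2 * Real.pi))
    (lam : ℝ) (c₀ : ℂ)
    (hc₀ : c₀ = ((2 * Real.pi : ℝ) : ℂ)⁻¹ * ∫ t in (0:ℝ)..(2 * Real.pi), c t)
    (hnres : ∀ m : ℤ, (lam : ℂ) * c₀ ≠ (m : ℂ))
    (U : ℝ → ℂ)
    (hU : ∀ t : ℝ, U t =
      Complex.I * (1 - Complex.exp (-(2 * Real.pi * Complex.I * (lam : ℂ) * c₀)))⁻¹ *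
        ∫ s in (0:ℝ)..(2 * Real.pi),
          Complex.exp (-(Complex.I * (lam : ℂ) * ∫ r in (t - s)..t, c r)) * f (t - s)) :
    (Differentiable ℝ U ∧ Function.Periodic U (2 * Real.pi) ∧
      (∀ t : ℝ, deriv U t + Complex.I * (lam : ℂ) * c t * U t = Complex.I * f t)) ∧
    (∀ u : ℝ → ℂ, Differentiable ℝ u → Function.Periodic u (2 * Real.pi) →
      (∀ t : ℝ, deriv u t + Complex.I * (lam : ℂ) * c t * u t = Complex.I * f t) →
      u = U) := by
  set L : ℂ := (lam : ℂ) with hL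
  set C : ℝ → ℂ := fun t => ∫ r in (0:ℝ)..t, c r with hCdef
  have hCd : ∀ t, HasDerivAt C (c t) t := fun t => hasDerivAt_primitive' hc t
  have hCcont : Continuous C := by
    rw [continuous_iff_continuousAt]; exact fun t => (hCd t).continuousAt
  have hC0 : C 0 = 0 := intervalIntegral.integral_same
  have hπC : (2 * (Real.pi : ℂ)) ≠ 0 := by
    simp [Real.pi_ne_zero, Complex.ofReal_ne_zero]
  have hC2π : C (2 * Real.pi) = 2 * (Real.pi : ℂ) * c₀ := by
    rw [hc₀]
    push_cast
    rw [← mul_assoc, mul_inv_cancel₀ hπC, one_mul]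
  have hshift : ∀ t : ℝ, C (t + 2 * Real.pi) = C t + 2 * (Real.pi : ℂ) * c₀ := by
    have hcomp : ∀ t : ℝ, HasDerivAt (fun x : ℝ => C (x + 2 * Real.pi))
        (c (t + 2 * Real.pi)) t := by
      intro t
      exact (hCd (t + 2 * Real.pi)).comp_add_const t (2 * Real.pi)
    have hdiff : Differentiable ℝ (fun t => C (t + 2 * Real.pi) - C t) := fun t =>
      ((hcomp t).sub (hCd t)).differentiableAt
    have hder : ∀ t, deriv (fun t => C (t + 2 * Real.pi) - C t) t = 0 := by
      intro t
      have h1 : HasDerivAt (fun t => C (t + 2 * Real.pi) - C t) (c (t + 2 * Real.pi) - c t) t :=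
        (hcomp t).sub (hCd t)
      rw [h1.deriv, hcper t, sub_self]
    intro t
    have h2 : C (t + 2 * Real.pi) - C t = C (0 + 2 * Real.pi) - C 0 :=
      is_const_of_deriv_eq_zero hdiff hder t 0
    rw [zero_add, hC0, sub_zero, hC2π] at h2
    linear_combination h2
  have h2πI : (2 * (Real.pi : ℂ)) * Complex.I ≠ 0 := by
    simp [Real.pi_ne_zero, Complex.I_ne_zero, Complex.ofReal_ne_zero]
  have hE1 : Complex.exp (-(2 * (Real.pi : ℂ) * Complex.I * L * c₀)) ≠ 1 := by
    intro h
    rw [Complex.exp_eq_one_iff] at h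
    obtain ⟨n, hn⟩ := h
    apply hnres (-n)
    have h3 : (2 * (Real.pi : ℂ) * Complex.I) * (L * c₀)
        = (2 * (Real.pi : ℂ) * Complex.I) * (((-n : ℤ) : ℂ)) := by
      push_cast at hn ⊢
      linear_combination -hn
    exact mul_left_cancel₀ h2πI h3
  have hE2 : Complex.exp (Complex.I * L * (2 * (Real.pi : ℂ) * c₀)) ≠ 1 := by
    intro h
    rw [Complex.exp_eq_one_iff] at h
    obtain ⟨n, hn⟩ := h
    apply hnres n
    have h3 : (2 * (Real.pi : ℂ) * Complex.I) * (L * c₀)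
        = (2 * (Real.pi : ℂ) * Complex.I) * ((n : ℤ) : ℂ) := by
      linear_combination hn
    exact mul_left_cancel₀ h2πI h3
  set E : ℂ := Complex.exp (-(2 * (Real.pi : ℂ) * Complex.I * L * c₀)) with hEdef
  set K : ℂ := (1 - E)⁻¹ with hKdef
  have hKE : K * (1 - E) = 1 := inv_mul_cancel₀ (sub_ne_zero.mpr (Ne.symm hE1))
  set g : ℝ → ℂ := fun σ => Complex.exp (Complex.I * L * C σ) * f σ with hgdef
  have hgval : ∀ σ, g σ = Complex.exp (Complex.I * L * C σ) * f σ := fun _ => rfl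
  have hgcont : Continuous g :=
    (Complex.continuous_exp.comp (continuous_const.mul hCcont)).mul hf
  have hab : ∀ a b : ℝ, (∫ r in a..b, c r) = C b - C a := fun a b => integral_eq_sub' hc a b
  set G : ℝ → ℂ := fun t => ∫ σ in (0:ℝ)..t, g σ with hGdef
  have hGd : ∀ t, HasDerivAt G (g t) t := fun t => hasDerivAt_primitive' hgcont t
  -- rewriting of U
  have hUeq : ∀ t : ℝ, U t = Complex.I * K *
      (Complex.exp (-(Complex.I * L * C t)) * (G t - G (t - 2 * Real.pi))) := by
    intro t
    rw [hU t]
    have h1 : ∀ s : ℝ,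
        Complex.exp (-(Complex.I * L * ∫ r in (t - s)..t, c r)) * f (t - s)
          = Complex.exp (-(Complex.I * L * C t)) * g (t - s) := by
      intro s
      rw [hab, hgval]
      rw [show Complex.exp (-(Complex.I * L * (C t - C (t - s))))
          = Complex.exp (-(Complex.I * L * C t)) * Complex.exp (Complex.I * L * C (t - s)) by
        rw [← Complex.exp_add]; congr 1; ring]
      ring
    simp only [h1]
    rw [intervalIntegral.integral_const_mul]
    have h2 : (∫ s in (0:ℝ)..(2 * Real.pi), g (t - s)) = G t - G (t - 2 * Real.pi) := by
      rw [intervalIntegral.integral_comp_sub_left (fun σ => g σ) t, sub_zero,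
        integral_eq_sub' hgcont]
    rw [h2]
  have hCshift : ∀ t : ℝ, C (t - 2 * Real.pi) = C t - 2 * (Real.pi : ℂ) * c₀ := by
    intro t
    have h := hshift (t - 2 * Real.pi)
    rw [sub_add_cancel] at h
    linear_combination -h
  have hfshift : ∀ t : ℝ, f (t - 2 * Real.pi) = f t := by
    intro t
    have h := hfper (t - 2 * Real.pi)
    rw [sub_add_cancel] at h
    exact h.symm
  -- derivative of U
  have hUd : ∀ t : ℝ, HasDerivAt U (Complex.I * f t - Complex.I * L * c t * U t) t := by
    intro t
    have he : HasDerivAt (fun t => Complex.exp (-(Complex.I * L * C t)))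
        (Complex.exp (-(Complex.I * L * C t)) * (-(Complex.I * L * c t))) t :=
      (((hCd t).const_mul (Complex.I * L)).neg).cexp
    have hH : HasDerivAt (fun t => G t - G (t - 2 * Real.pi))
        (g t - g (t - 2 * Real.pi)) t := by
      have h2 : HasDerivAt (fun x : ℝ => G (x - 2 * Real.pi)) (g (t - 2 * Real.pi)) t := by
        exact (hGd (t - 2 * Real.pi)).comp_sub_const t (2 * Real.pi)
      exact (hGd t).sub h2
    have hprod := (he.mul hH).const_mul (Complex.I * K)
    have hU' : HasDerivAt U (Complex.I * K *
        (Complex.exp (-(Complex.I * L * C t)) * (-(Complex.I * L * c t)) *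
            (G t - G (t - 2 * Real.pi)) +
          Complex.exp (-(Complex.I * L * C t)) * (g t - g (t - 2 * Real.pi)))) t :=
      hprod.congr_of_eventuallyEq (Filter.Eventually.of_forall hUeq)
    have heg1 : Complex.exp (-(Complex.I * L * C t)) * g t = f t := by
      rw [hgval, ← mul_assoc, ← Complex.exp_add]
      simp
    have heg2 : Complex.exp (-(Complex.I * L * C t)) * g (t - 2 * Real.pi) = E * f t := by
      rw [hgval, hCshift, hfshift, ← mul_assoc, ← Complex.exp_add, hEdef]
      congr 2
      ring
    convert hU' using 1
    have huv := hUeq t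
    linear_combination (-(Complex.I * L * c t)) * huv - Complex.I * K * heg1 +
      Complex.I * K * heg2 - Complex.I * (f t) * hKE
  -- periodicity
  have hUper : Function.Periodic U (2 * Real.pi) := by
    intro t
    rw [hU t, hU (t + 2 * Real.pi)]
    have hint : ∀ s : ℝ,
        Complex.exp (-(Complex.I * L * ∫ r in (t + 2 * Real.pi - s)..(t + 2 * Real.pi), c r)) *
            f (t + 2 * Real.pi - s)
          = Complex.exp (-(Complex.I * L * ∫ r in (t - s)..t, c r)) * f (t - s) := by
      intro s
      have e1 : t + 2 * Real.pi - s = (t - s) + 2 * Real.pi := by ring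
      rw [e1, hab, hab, hfper (t - s), hshift, hshift (t - s),
        show (C t + 2 * (Real.pi : ℂ) * c₀) - (C (t - s) + 2 * (Real.pi : ℂ) * c₀)
          = C t - C (t - s) by ring, ← hab]
    simp only [hint]
  -- ODE
  have hode : ∀ t : ℝ, deriv U t + Complex.I * L * c t * U t = Complex.I * f t := by
    intro t
    rw [(hUd t).deriv]
    ring
  refine ⟨⟨fun t => (hUd t).differentiableAt, hUper, hode⟩, ?_⟩
  -- uniqueness
  intro u hud huper hueq
  have hw : ∀ t, HasDerivAt (fun t => u t - U t) (-(Complex.I * L * c t) * (u t - U t)) t := by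
    intro t
    have h1 : HasDerivAt u (deriv u t) t := (hud t).hasDerivAt
    have h2 : HasDerivAt (fun t => u t - U t)
        (deriv u t - (Complex.I * f t - Complex.I * L * c t * U t)) t := (h1.sub (hUd t))
    convert h2 using 1
    linear_combination -(hueq t)
  have hφd : ∀ t, HasDerivAt (fun t => Complex.exp (Complex.I * L * C t) * (u t - U t)) 0 t := by
    intro t
    have h1 : HasDerivAt (fun t => Complex.exp (Complex.I * L * C t))
        (Complex.exp (Complex.I * L * C t) * (Complex.I * L * c t)) t :=
      ((hCd t).const_mul (Complex.I * L)).cexp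
    have h2 : HasDerivAt (fun t => Complex.exp (Complex.I * L * C t) * (u t - U t))
        (Complex.exp (Complex.I * L * C t) * (Complex.I * L * c t) * (u t - U t) +
          Complex.exp (Complex.I * L * C t) * (-(Complex.I * L * c t) * (u t - U t))) t :=
      h1.mul (hw t)
    convert h2 using 1
    ring
  have hφconst := is_const_of_deriv_eq_zero (fun t => (hφd t).differentiableAt)
    (fun t => (hφd t).deriv)
  have hw0 : u 0 - U 0 = 0 := by
    have h1 := hφconst (2 * Real.pi) 0
    rw [hC0, hC2π] at h1
    have h2 : u (2 * Real.pi) = u 0 := by simpa using huper 0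
    have h3 : U (2 * Real.pi) = U 0 := by simpa using hUper 0
    rw [h2, h3] at h1
    simp only [mul_zero, Complex.exp_zero, one_mul] at h1
    by_contra hne
    exact hE2 (mul_right_cancel₀ hne (h1.trans (one_mul _).symm))
  funext t
  have h1 := hφconst t 0
  rw [hC0] at h1
  simp only [mul_zero, Complex.exp_zero, one_mul] at h1
  rw [hw0] at h1
  have h2 := (mul_eq_zero.mp h1).resolve_left (Complex.exp_ne_zero _)
  exact sub_eq_zero.mp h2
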